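/- Let R be a Noetherian local ring, M a finite R-module, and A = R ⋉ M the idealization. If P is an associated prime of the R-module M, then P ⋉ M is an associated prime of the ring A. -/

import Mathlib

open TrivSqZeroExt

/-- Let `R` be a Noetherian local ring, `M` a finite `R`-module, and
`A = R ⋉ M` the idealization.  If `P` is an associated prime of the `R`-module `M`, then
`P ⋉ M` (the preimage of `P` under the projection `A → R`) is an associated prime of the
ring `A` as a module over itself. -/
theorem associatedPrime_idealization_of_module {R M : Type*} [CommRing R] [IsNoetherianRing R]
    [IsLocalRing R] [AddCommGroup M] [Module R M] [Module Rᵐᵒᵖ M] [IsCentralScalar R M]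
    [Module.Finite R M] (P : Ideal R) (h : IsAssociatedPrime P M) :
    IsAssociatedPrime (Ideal.comap (fstHom R R M) P) (TrivSqZeroExt R M) := by
  obtain ⟨hP, m, hm⟩ := isAssociatedPrime_iff.mp h
  refine ⟨Ideal.IsPrime.comap _, inr m, ?_⟩
  suffices hs : Ideal.comap (fstHom R R M) P = (⊥ : Submodule _ _).colon {inr m} by
    rw [← hs, (Ideal.IsPrime.comap (fstHom R R M) (hK := hP)).radical]
  ext a
  have h1 : a * inr m = inr (fst a • m) := by
    ext
    · simp
    · simp [snd_mul]
  have h2 : (fst a ∈ P) ↔ fst a • m = 0 := by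
    rw [hm, Submodule.mem_colon_singleton, Submodule.mem_bot]
  simp only [Ideal.mem_comap, fstHom_apply, Submodule.mem_colon_singleton, Submodule.mem_bot,
    smul_eq_mul, h1, h2]
  constructor
  · intro hx; rw [hx, inr_zero]
  · intro hx
    have := congrArg snd hx
    simpa using this
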